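/- Let X₁, X₂, ... be a sequence of nonnegative-integer-valued random variables and μ > 0. If for every m ∈ ℕ the m-th factorial moment converges, E[(X_n)(X_n-1)···(X_n-m+1)] → μ^m as n → ∞, then X_n converges in distribution to a Poisson random variable with mean μ. -/

import Mathlib

open Filter MeasureTheory ProbabilityTheory

namespace MomPoisson

lemma choose_mul_choose (x k j : ℕ) :
    (k + j).choose k * x.choose (k + j) = x.choose k * (x - k).choose j := by
  rcases le_or_gt (k + j) x with h | h
  · have h2 : k ≤ k + j := Nat.le_add_right _ _
    have := Nat.choose_mul (n := x) h2
    rw [Nat.add_sub_cancel_left] at this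
    rw [mul_comm, this]
  · rw [Nat.choose_eq_zero_of_lt h, mul_zero]
    rcases lt_or_ge x k with hxk | hxk
    · rw [Nat.choose_eq_zero_of_lt hxk, zero_mul]
    · have h0 : (x - k).choose j = 0 := Nat.choose_eq_zero_of_lt (by omega)
      rw [h0, mul_zero]

lemma alt_sum (m r : ℕ) :
    ∑ j ∈ Finset.range (r + 1), (-1 : ℤ) ^ j * ((m + 1).choose j : ℤ)
      = (-1) ^ r * (m.choose r : ℤ) := by
  induction r with
  | zero => simp
  | succ r ih =>
      rw [Finset.sum_range_succ, ih, Nat.choose_succ_succ, Nat.cast_add]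
      ring

noncomputable def Sc (k r x : ℕ) : ℤ :=
  ∑ j ∈ Finset.range (r + 1), (-1) ^ j * ((k + j).choose k : ℤ) * (x.choose (k + j) : ℤ)

lemma Sc_lt {x k : ℕ} (r : ℕ) (h : x < k) : Sc k r x = 0 := by
  unfold Sc
  refine Finset.sum_eq_zero fun j _ => ?_
  have h0 : x.choose (k + j) = 0 := Nat.choose_eq_zero_of_lt (by omega)
  rw [h0, Nat.cast_zero, mul_zero]

lemma Sc_self (k r : ℕ) : Sc k r k = 1 := by
  unfold Sc
  rw [Finset.sum_eq_single_of_mem 0 (Finset.mem_range.2 (Nat.succ_pos r))]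
  · simp
  · intro j _ hj
    have h0 : k.choose (k + j) = 0 := Nat.choose_eq_zero_of_lt (by omega)
    rw [h0, Nat.cast_zero, mul_zero]

lemma Sc_gt {x k : ℕ} (r : ℕ) (h : k < x) :
    Sc k r x = (-1) ^ r * ((x.choose k : ℤ) * ((x - k - 1).choose r : ℤ)) := by
  unfold Sc
  have hm : x - k = (x - k - 1) + 1 := by omega
  calc ∑ j ∈ Finset.range (r + 1), (-1 : ℤ) ^ j * ((k + j).choose k : ℤ) * (x.choose (k + j) : ℤ)
      = ∑ j ∈ Finset.range (r + 1), (x.choose k : ℤ) * ((-1) ^ j * ((x - k).choose j : ℤ)) := by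
        refine Finset.sum_congr rfl fun j _ => ?_
        have := choose_mul_choose x k j
        have hc : ((k + j).choose k : ℤ) * (x.choose (k + j) : ℤ)
            = (x.choose k : ℤ) * ((x - k).choose j : ℤ) := by exact_mod_cast congrArg Nat.cast this
        rw [mul_assoc, hc]; ring
    _ = (x.choose k : ℤ) * ∑ j ∈ Finset.range (r + 1), (-1) ^ j * ((x - k).choose j : ℤ) := by
        rw [Finset.mul_sum]
    _ = (-1) ^ r * ((x.choose k : ℤ) * ((x - k - 1).choose r : ℤ)) := by
        rw [hm, alt_sum, Nat.add_sub_cancel]; ring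


/-- The real Bonferroni partial sum, in descFactorial form. -/
noncomputable def Sr (k r x : ℕ) : ℝ :=
  ∑ j ∈ Finset.range (r + 1),
    (-1 : ℝ) ^ j / (k.factorial * j.factorial) * (x.descFactorial (k + j) : ℝ)

lemma descF_cast (x k j : ℕ) :
    (x.descFactorial (k + j) : ℝ)
      = ((k + j).choose k : ℝ) * (k.factorial : ℝ) * (j.factorial : ℝ) * (x.choose (k + j) : ℝ) := by
  have h1 : x.descFactorial (k + j) = (k + j).factorial * x.choose (k + j) :=
    Nat.descFactorial_eq_factorial_mul_choose _ _
  have hsymm : (k + j).choose k = (k + j).choose j := by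
    rw [← Nat.choose_symm (Nat.le_add_right k j), Nat.add_sub_cancel_left]
  have h2 : (k + j).choose k * k.factorial * j.factorial = (k + j).factorial := by
    rw [hsymm]; exact Nat.add_choose_mul_factorial_mul_factorial k j
  rw [h1, ← h2]
  push_cast
  ring

lemma Sr_eq_cast (k r x : ℕ) : Sr k r x = ((Sc k r x : ℤ) : ℝ) := by
  unfold Sr Sc
  push_cast
  refine Finset.sum_congr rfl fun j _ => ?_
  rw [descF_cast]
  have hk : (k.factorial : ℝ) ≠ 0 := by exact_mod_cast k.factorial_ne_zero
  have hj : (j.factorial : ℝ) ≠ 0 := by exact_mod_cast j.factorial_ne_zero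
  field_simp

lemma ind_le_Sr (k r x : ℕ) : (if x = k then (1 : ℝ) else 0) ≤ Sr k (2 * r) x := by
  rw [Sr_eq_cast]
  rcases lt_trichotomy x k with h | h | h
  · rw [Sc_lt _ h, if_neg (by omega)]; simp
  · subst h; rw [Sc_self, if_pos rfl]; simp
  · rw [Sc_gt _ h, if_neg (by omega)]
    push_cast
    rw [pow_mul, neg_one_sq, one_pow, one_mul]
    positivity

lemma Sr_le_ind (k r x : ℕ) : Sr k (2 * r + 1) x ≤ (if x = k then (1 : ℝ) else 0) := by
  rw [Sr_eq_cast]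
  rcases lt_trichotomy x k with h | h | h
  · rw [Sc_lt _ h, if_neg (by omega)]; simp
  · subst h; rw [Sc_self, if_pos rfl]; simp
  · rw [Sc_gt _ h, if_neg (by omega)]
    push_cast
    rw [show ((-1:ℝ)) ^ (2 * r + 1) = -1 by rw [pow_succ, pow_mul, neg_one_sq, one_pow, one_mul]]
    have hA : (0:ℝ) ≤ (x.choose k : ℝ) * (((x - k - 1).choose (2 * r + 1) : ℕ) : ℝ) := by positivity
    linarith


lemma prod_cast (x m : ℕ) :
    ∏ j ∈ Finset.range m, ((x : ℝ) - (j : ℝ)) = (x.descFactorial m : ℝ) := by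
  rcases le_or_gt m x with h | h
  · rw [Nat.descFactorial_eq_prod_range, Nat.cast_prod]
    refine Finset.prod_congr rfl fun j hj => ?_
    rw [Nat.cast_sub (le_of_lt (lt_of_lt_of_le (Finset.mem_range.1 hj) h))]
  · rw [Nat.descFactorial_eq_zero_iff_lt.2 h, Nat.cast_zero]
    exact Finset.prod_eq_zero (Finset.mem_range.2 h) (by simp)

open scoped Nat in
lemma tendsto_T (μ : NNReal) (k : ℕ) :
    Tendsto (fun r => ∑ j ∈ Finset.range (r + 1),
        (-1 : ℝ) ^ j / (k.factorial * j.factorial) * (μ : ℝ) ^ (k + j))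
      atTop (nhds (poissonPMFReal μ k)) := by
  have hk : (k.factorial : ℝ) ≠ 0 := by exact_mod_cast k.factorial_ne_zero
  have hc : ∀ j : ℕ, (-1 : ℝ) ^ j / (k.factorial * j.factorial) * (μ : ℝ) ^ (k + j)
      = ((μ : ℝ) ^ k / k.factorial) * ((-(μ : ℝ)) ^ j / j.factorial) := by
    intro j
    have hj : (j.factorial : ℝ) ≠ 0 := by exact_mod_cast j.factorial_ne_zero
    rw [pow_add, neg_pow]
    field_simp
    ring
  have hs : HasSum (fun j : ℕ => ((μ : ℝ) ^ k / k.factorial) * ((-(μ : ℝ)) ^ j / j.factorial))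
      (((μ : ℝ) ^ k / k.factorial) * Real.exp (-(μ : ℝ))) := by
    have h := NormedSpace.expSeries_div_hasSum_exp (-(μ : ℝ))
    rw [← Real.exp_eq_exp_ℝ] at h
    exact h.mul_left _
  have h2 := hs.tendsto_sum_nat
  have h3 := h2.comp (tendsto_add_atTop_nat 1)
  have hval : ((μ : ℝ) ^ k / k.factorial) * Real.exp (-(μ : ℝ)) = poissonPMFReal μ k := by
    rw [poissonPMFReal]
    ring
  rw [← hval]
  refine Tendsto.congr (fun r => ?_) h3
  exact Finset.sum_congr rfl fun j _ => (hc j).symm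

end MomPoisson

/-- Method of moments for the Poisson distribution: if `X₁, X₂, …` are `ℕ`-valued random
variables whose `m`-th factorial moments `E[(Xₙ)ₘ] = E[Xₙ(Xₙ-1)⋯(Xₙ-m+1)]` converge to
`μ^m` for every `m`, then `Xₙ` converges in distribution to `Poisson(μ)`; for `ℕ`-valued
random variables this is equivalent to pointwise convergence of the probability mass
functions `P(Xₙ = k) → e^{-μ} μ^k / k!`. -/
theorem factorial_moments_tendsto_poisson {Ω : Type*} [MeasurableSpace Ω]
    (P : Measure Ω) [IsProbabilityMeasure P]
    (X : ℕ → Ω → ℕ) (hX : ∀ n, Measurable (X n))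
    (μ : NNReal) (hμ : 0 < μ)
    (hmom : ∀ m : ℕ, Tendsto
      (fun n => ∫ ω, (∏ j ∈ Finset.range m, ((X n ω : ℝ) - (j : ℝ))) ∂P)
      atTop (nhds ((μ : ℝ) ^ m))) :
    ∀ k : ℕ, Tendsto (fun n => (P {ω | X n ω = k}).toReal) atTop
      (nhds (poissonPMFReal μ k)) := by
  intro k
  set a : ℕ → ℝ := fun n => (P {ω | X n ω = k}).toReal with ha
  have hμpos : (0 : ℝ) < (μ : ℝ) := by exact_mod_cast hμ
  -- the factorial moments, in descFactorial form
  have hdesc : ∀ m : ℕ, Tendsto (fun n => ∫ ω, ((X n ω).descFactorial m : ℝ) ∂P)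
      atTop (nhds ((μ : ℝ) ^ m)) := by
    intro m
    refine (hmom m).congr fun n => ?_
    exact integral_congr_ae (Filter.Eventually.of_forall fun ω => MomPoisson.prod_cast _ m)
  -- eventual integrability of the factorial moments
  have hint : ∀ m : ℕ, ∀ᶠ n in atTop,
      Integrable (fun ω => ((X n ω).descFactorial m : ℝ)) P := by
    intro m
    have hne := (hdesc m).eventually_ne (ne_of_gt (pow_pos hμpos m))
    filter_upwards [hne] with n hn
    by_contra hni
    exact hn (integral_undef hni)
  -- measurable sets
  have hsm : ∀ n, MeasurableSet {ω | X n ω = k} := fun n => hX n (measurableSet_singleton k)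
  have hindrep : ∀ n, (fun ω => if X n ω = k then (1 : ℝ) else 0)
      = Set.indicator {ω | X n ω = k} (fun _ => 1) := by
    intro n
    funext ω
    simp [Set.indicator_apply, Set.mem_setOf_eq]
  have haint : ∀ n, Integrable (fun ω => if X n ω = k then (1 : ℝ) else 0) P := by
    intro n
    rw [hindrep n]
    exact (integrable_const 1).indicator (hsm n)
  have haval : ∀ n, ∫ ω, (if X n ω = k then (1 : ℝ) else 0) ∂P = a n := by
    intro n
    rw [hindrep n, integral_indicator_const (1 : ℝ) (hsm n), smul_eq_mul, mul_one]
    rfl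
  -- the approximating sums and their limits
  set T : ℕ → ℝ := fun r => ∑ j ∈ Finset.range (r + 1),
      (-1 : ℝ) ^ j / (k.factorial * j.factorial) * (μ : ℝ) ^ (k + j) with hTdef
  set b : ℕ → ℕ → ℝ := fun r n => ∑ j ∈ Finset.range (r + 1),
      (-1 : ℝ) ^ j / (k.factorial * j.factorial) *
        ∫ ω, ((X n ω).descFactorial (k + j) : ℝ) ∂P with hbdef
  have hbT : ∀ r, Tendsto (b r) atTop (nhds (T r)) := by
    intro r
    exact tendsto_finset_sum _ fun j _ => ((hdesc (k + j)).const_mul _)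
  have hall : ∀ r, ∀ᶠ n in atTop, ∀ j ∈ Finset.range (r + 1),
      Integrable (fun ω => ((X n ω).descFactorial (k + j) : ℝ)) P := by
    intro r
    exact (Filter.eventually_all_finset _).2 fun j _ => hint (k + j)
  have hbS : ∀ r, ∀ᶠ n in atTop, b r n = ∫ ω, MomPoisson.Sr k r (X n ω) ∂P := by
    intro r
    filter_upwards [hall r] with n hn
    have : (fun ω => MomPoisson.Sr k r (X n ω)) = fun ω => ∑ j ∈ Finset.range (r + 1),
        (-1 : ℝ) ^ j / (k.factorial * j.factorial) * ((X n ω).descFactorial (k + j) : ℝ) := rfl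
    rw [this, integral_finset_sum _ (fun j hj => (hn j hj).const_mul _)]
    exact Finset.sum_congr rfl fun j _ => (integral_const_mul _ _).symm
  have hSint : ∀ r, ∀ᶠ n in atTop, Integrable (fun ω => MomPoisson.Sr k r (X n ω)) P := by
    intro r
    filter_upwards [hall r] with n hn
    have : (fun ω => MomPoisson.Sr k r (X n ω)) = fun ω => ∑ j ∈ Finset.range (r + 1),
        (-1 : ℝ) ^ j / (k.factorial * j.factorial) * ((X n ω).descFactorial (k + j) : ℝ) := rfl
    rw [this]
    exact integrable_finset_sum _ fun j hj => (hn j hj).const_mul _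
  -- the two eventual bounds
  have hupper : ∀ r, ∀ᶠ n in atTop, a n ≤ b (2 * r) n := by
    intro r
    filter_upwards [hbS (2 * r), hSint (2 * r)] with n h1 h2
    rw [h1, ← haval n]
    exact integral_mono (haint n) h2 fun ω => MomPoisson.ind_le_Sr k r (X n ω)
  have hlower : ∀ r, ∀ᶠ n in atTop, b (2 * r + 1) n ≤ a n := by
    intro r
    filter_upwards [hbS (2 * r + 1), hSint (2 * r + 1)] with n h1 h2
    rw [h1, ← haval n]
    exact integral_mono h2 (haint n) fun ω => MomPoisson.Sr_le_ind k r (X n ω)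
  -- boundedness of `a`
  have ha0 : ∀ n, 0 ≤ a n := fun n => ENNReal.toReal_nonneg
  have ha1 : ∀ n, a n ≤ 1 := by
    intro n
    have h1 : P {ω | X n ω = k} ≤ 1 := prob_le_one
    simpa using ENNReal.toReal_mono ENNReal.one_ne_top h1
  have hBu : IsBoundedUnder (· ≤ ·) atTop a := isBoundedUnder_of ⟨1, fun n => ha1 n⟩
  have hBl : IsBoundedUnder (· ≥ ·) atTop a := isBoundedUnder_of ⟨0, fun n => ha0 n⟩
  have hTlim : Tendsto T atTop (nhds (poissonPMFReal μ k)) := MomPoisson.tendsto_T μ k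
  -- squeeze
  have hsup : limsup a atTop ≤ poissonPMFReal μ k := by
    have h2r : Tendsto (fun r => T (2 * r)) atTop (nhds (poissonPMFReal μ k)) :=
      hTlim.comp (tendsto_atTop_mono (fun r => by simp only [id_eq]; omega) tendsto_id)
    refine ge_of_tendsto' h2r fun r => ?_
    calc limsup a atTop ≤ limsup (b (2 * r)) atTop :=
          limsup_le_limsup (hupper r) hBl.isCoboundedUnder_le (hbT (2 * r)).isBoundedUnder_le
      _ = T (2 * r) := (hbT (2 * r)).limsup_eq
  have hinf : poissonPMFReal μ k ≤ liminf a atTop := by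
    have h2r : Tendsto (fun r => T (2 * r + 1)) atTop (nhds (poissonPMFReal μ k)) :=
      hTlim.comp (tendsto_atTop_mono (fun r => by simp only [id_eq]; omega) tendsto_id)
    refine le_of_tendsto' h2r fun r => ?_
    calc T (2 * r + 1) = liminf (b (2 * r + 1)) atTop := ((hbT (2 * r + 1)).liminf_eq).symm
      _ ≤ liminf a atTop :=
          liminf_le_liminf (hlower r) (hbT (2 * r + 1)).isBoundedUnder_ge hBu.isCoboundedUnder_ge
  exact tendsto_of_le_liminf_of_limsup_le hinf hsup hBu hBl
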